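/- Let 0 < q < 1 and let a, b, c, d be complex numbers. Let f[z] = Σ_{k=−n}^{n} c_k z^k be a symmetric Laurent polynomial (c_k = c_{−k}) of degree at most n. Then (L f)[z] := [(1−az)(1−bz)(1−cz)(1−dz) z^{−2} f[qz] − (1−a/z)(1−b/z)(1−c/z)(1−d/z) z² f[q^{−1}z]] / (z − z^{−1}) is again a symmetric Laurent polynomial, of degree at most n+1, and its coefficient of z^{n+1} equals (abcd q^n − q^{−n}) c_n. In particular, if c_n ≠ 0 and abcd q^{2n} ≠ 1, then L f has degree exactly n+1. -/

import Mathlib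

/-- The divided q-difference operator `L` of the paper, equation (1.7)/(4.7). -/
noncomputable def awL (q a b c d : ℂ) (f : ℂ → ℂ) (z : ℂ) : ℂ :=
  ((1 - a * z) * (1 - b * z) * (1 - c * z) * (1 - d * z) * z ^ (-2 : ℤ) * f (q * z) -
      (1 - a / z) * (1 - b / z) * (1 - c / z) * (1 - d / z) * z ^ 2 * f (q⁻¹ * z)) /
    (z - z⁻¹)

/-- A symmetric Laurent polynomial `f[z] = Σ_{k=-n}^{n} c_k z^k`. -/
noncomputable def symLaurent (n : ℕ) (c : ℤ → ℂ) (z : ℂ) : ℂ :=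
  ∑ k ∈ Finset.Icc (-(n : ℤ)) (n : ℤ), c k * z ^ k


open Finset

namespace AW

noncomputable def E (n : ℕ) (cf : ℤ → ℂ) (k : ℤ) : ℂ :=
  if k ∈ Finset.Icc (-(n:ℤ)) (n:ℤ) then cf k else 0

noncomputable def p (a b c d : ℂ) : ℕ → ℂ
  | 0 => 1
  | 1 => -(a+b+c+d)
  | 2 => a*b+a*c+a*d+b*c+b*d+c*d
  | 3 => -(a*b*c+a*b*d+a*c*d+b*c*d)
  | 4 => a*b*c*d
  | _ => 0

noncomputable def gco (q a b c d : ℂ) (n : ℕ) (cf : ℤ → ℂ) (j : ℤ) : ℂ :=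
  ∑ i ∈ range 5, p a b c d i * q ^ (j + 2 - (i:ℤ)) * E n cf (j + 2 - (i:ℤ))

noncomputable def bb (q a b c d : ℂ) (n : ℕ) (cf : ℤ → ℂ) (j : ℤ) : ℂ :=
  gco q a b c d n cf j - gco q a b c d n cf (-j)

noncomputable def cc (q a b c d : ℂ) (n : ℕ) (cf : ℤ → ℂ) (m : ℤ) : ℂ :=
  ∑ j ∈ Icc (|m|+1) ((n:ℤ)+6), if Odd (j - m) then bb q a b c d n cf j else 0

lemma P_eq (a b c d w : ℂ) :
    (1 - a*w) * (1 - b*w) * (1 - c*w) * (1 - d*w) = ∑ i ∈ range 5, p a b c d i * w ^ i := by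
  simp [Finset.sum_range_succ, p]; ring

lemma sum_shift (H : ℤ → ℂ) (n : ℕ) (hH : ∀ k, k ∉ Finset.Icc (-(n:ℤ)) (n:ℤ) → H k = 0)
    (t : ℤ) (ht : |t| ≤ 6) :
    ∑ k ∈ Icc (-(n:ℤ)-6) ((n:ℤ)+6), H k = ∑ j ∈ Icc (-(n:ℤ)-6) ((n:ℤ)+6), H (j - t) := by
  obtain ⟨ht1, ht2⟩ := abs_le.mp ht
  have h1 : ∑ k ∈ Icc (-(n:ℤ)) (n:ℤ), H k = ∑ k ∈ Icc (-(n:ℤ)-6) ((n:ℤ)+6), H k := by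
    apply sum_subset
    · intro x hx; simp only [mem_Icc] at *; omega
    · intro x _ hx; exact hH x hx
  have h2 : ∑ j ∈ Icc (t-(n:ℤ)) (t+(n:ℤ)), H (j - t)
      = ∑ j ∈ Icc (-(n:ℤ)-6) ((n:ℤ)+6), H (j - t) := by
    apply sum_subset
    · intro x hx; simp only [mem_Icc] at *; omega
    · intro x hx hx'; apply hH; simp only [mem_Icc] at *; omega
  rw [← h1, ← h2]
  apply Finset.sum_nbij' (fun k => k + t) (fun j => j - t)
  · intro x hx; simp only [mem_Icc] at *; omega
  · intro x hx; simp only [mem_Icc] at *; omega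
  · intro x _; omega
  · intro x _; omega
  · intro x _; simp

lemma G_eq (q a b c d : ℂ) (hq : q ≠ 0) (n : ℕ) (cf : ℤ → ℂ) (w : ℂ) (hw : w ≠ 0) :
    (1 - a*w) * (1 - b*w) * (1 - c*w) * (1 - d*w) * w ^ (-2:ℤ) * symLaurent n cf (q*w)
      = ∑ j ∈ Icc (-(n:ℤ)-6) ((n:ℤ)+6), gco q a b c d n cf j * w ^ j := by
  have hqw : q * w ≠ 0 := mul_ne_zero hq hw
  have hf : symLaurent n cf (q*w) = ∑ k ∈ Icc (-(n:ℤ)-6) ((n:ℤ)+6), E n cf k * q ^ k * w ^ k := by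
    rw [symLaurent]
    rw [show ∑ k ∈ Icc (-(n:ℤ)) (n:ℤ), cf k * (q*w) ^ k
        = ∑ k ∈ Icc (-(n:ℤ)) (n:ℤ), E n cf k * q ^ k * w ^ k from
      Finset.sum_congr rfl (fun k hk => by rw [E, if_pos hk, mul_zpow]; ring)]
    apply sum_subset
    · intro x hx; simp only [mem_Icc] at *; omega
    · intro x _ hx; rw [E, if_neg hx]; ring
  rw [hf, P_eq a b c d w]
  rw [sum_mul, sum_mul]
  have main : ∀ i ∈ range 5,
      (p a b c d i * w ^ i * w ^ (-2:ℤ)) * ∑ k ∈ Icc (-(n:ℤ)-6) ((n:ℤ)+6), E n cf k * q ^ k * w ^ k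
      = ∑ j ∈ Icc (-(n:ℤ)-6) ((n:ℤ)+6),
          (p a b c d i * q ^ (j + 2 - (i:ℤ)) * E n cf (j + 2 - (i:ℤ))) * w ^ j := by
    intro i hi
    simp only [mem_range] at hi
    rw [mul_sum]
    have : ∀ k ∈ Icc (-(n:ℤ)-6) ((n:ℤ)+6),
        (p a b c d i * w ^ i * w ^ (-2:ℤ)) * (E n cf k * q ^ k * w ^ k)
        = (fun k => p a b c d i * q ^ k * E n cf k * w ^ (k + (i:ℤ) - 2)) k := by
      intro k _
      simp only
      rw [show (k + (i:ℤ) - 2) = k + ((i:ℤ) + (-2)) by ring, zpow_add₀ hw, zpow_add₀ hw,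
        zpow_natCast]
      ring
    rw [Finset.sum_congr rfl this]
    rw [sum_shift (fun k => p a b c d i * q ^ k * E n cf k * w ^ (k + (i:ℤ) - 2)) n
      (fun k hk => by simp only [E, if_neg hk]; ring) ((i:ℤ) - 2)
      (by rw [abs_le]; omega)]
    apply Finset.sum_congr rfl
    intro j _
    have h1 : j - ((i:ℤ) - 2) = j + 2 - (i:ℤ) := by ring
    rw [h1]
    rw [show j + 2 - (i:ℤ) + (i:ℤ) - 2 = j by ring]
  rw [Finset.sum_congr rfl main, Finset.sum_comm]
  apply Finset.sum_congr rfl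
  intro j _
  rw [gco, sum_mul]

lemma geom_tel (w : ℂ) (hw : w ≠ 0) : ∀ j : ℕ,
    w ^ (j:ℤ) - w ^ (-(j:ℤ)) = (w - w⁻¹) * ∑ i ∈ range j, w ^ ((j:ℤ) - 1 - 2*(i:ℤ)) := by
  intro j
  induction j with
  | zero => simp
  | succ j ih =>
    rw [Finset.sum_range_succ']
    push_cast
    have e1 : ∀ i : ℕ, ((j:ℤ) + 1 - 1 - 2*((i:ℤ)+1)) = (-1) + ((j:ℤ) - 1 - 2*(i:ℤ)) := by
      intro i; ring
    have e2 : ∑ i ∈ range j, w ^ ((j:ℤ) + 1 - 1 - 2*((i:ℤ)+1))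
        = w⁻¹ * ∑ i ∈ range j, w ^ ((j:ℤ) - 1 - 2*(i:ℤ)) := by
      rw [mul_sum]
      apply Finset.sum_congr rfl
      intro i _
      rw [e1 i, zpow_add₀ hw, zpow_neg_one]
    push_cast at e2 ⊢
    rw [e2]
    rw [mul_add, mul_comm (w - w⁻¹) (w⁻¹ * _), mul_assoc, mul_comm _ (w - w⁻¹), ← ih]
    have h1 : (w:ℂ) ^ ((j:ℤ)+1) = w ^ (j:ℤ) * w := by rw [zpow_add₀ hw]; simp
    have h2 : (w:ℂ) ^ (-((j:ℤ)+1)) = w ^ (-(j:ℤ)) * w⁻¹ := by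
      rw [show -((j:ℤ)+1) = -(j:ℤ) + (-1) by ring, zpow_add₀ hw, zpow_neg_one]
    rw [show ((j:ℤ) + 1 - 1 - 0 : ℤ) = (j:ℤ) by ring, h1, h2]
    ring

lemma key (b : ℤ → ℂ) (hb : ∀ j, b (-j) = - b j) (N : ℕ) (w : ℂ) (hw : w ≠ 0) :
    ∑ j ∈ Icc (-(N:ℤ)) (N:ℤ), b j * w ^ j
      = (w - w⁻¹) * ∑ m ∈ Icc (-(N:ℤ)+1) ((N:ℤ)-1),
          (∑ j ∈ Icc (|m|+1) (N:ℤ), if Odd (j - m) then b j else 0) * w ^ m := by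
  have hb0 : b 0 = 0 := by
    have h := hb 0
    rw [neg_zero] at h
    have h2 : b 0 + b 0 = 0 := by nth_rewrite 1 [h]; ring
    exact add_self_eq_zero.mp h2
  -- Step A: LHS = ∑_{j∈Icc 1 N} b j * (w^j - w^{-j})
  have stepA : ∑ j ∈ Icc (-(N:ℤ)) (N:ℤ), b j * w ^ j
      = ∑ j ∈ Icc (1:ℤ) (N:ℤ), b j * (w ^ j - w ^ (-j)) := by
    have hsplit : Icc (-(N:ℤ)) (N:ℤ) = Icc (-(N:ℤ)) 0 ∪ Icc (1:ℤ) (N:ℤ) := by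
      ext x; simp only [mem_Icc, mem_union]; omega
    have hdisj : Disjoint (Icc (-(N:ℤ)) 0) (Icc (1:ℤ) (N:ℤ)) := by
      simp only [Finset.disjoint_left, mem_Icc]; intro x h1 h2; omega
    rw [hsplit, Finset.sum_union hdisj]
    have hneg : ∑ j ∈ Icc (-(N:ℤ)) 0, b j * w ^ j
        = ∑ j ∈ Icc (0:ℤ) (N:ℤ), - b j * w ^ (-j) := by
      apply Finset.sum_nbij' (fun j => -j) (fun j => -j)
      · intro x hx; simp only [mem_Icc] at *; omega
      · intro x hx; simp only [mem_Icc] at *; omega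
      · intro x _; omega
      · intro x _; omega
      · intro x _; rw [hb, neg_neg, neg_neg]
    rw [hneg]
    have h0split : Icc (0:ℤ) (N:ℤ) = insert (0:ℤ) (Icc (1:ℤ) (N:ℤ)) := by
      ext x; simp only [mem_Icc, mem_insert]; omega
    rw [h0split, Finset.sum_insert (by simp), hb0]
    simp only [neg_zero, zero_mul, zero_add, neg_mul]
    rw [← Finset.sum_add_distrib]  -- maybe wrong name
    apply Finset.sum_congr rfl
    intro j _
    ring
  rw [stepA]
  -- Step B: telescoping
  have stepB : ∀ j ∈ Icc (1:ℤ) (N:ℤ),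
      b j * (w ^ j - w ^ (-j)) = (w - w⁻¹) * (b j * ∑ i ∈ range j.toNat, w ^ (j - 1 - 2*(i:ℤ))) := by
    intro j hj
    simp only [mem_Icc] at hj
    have hjt : ((j.toNat : ℤ)) = j := Int.toNat_of_nonneg (by omega)
    have := geom_tel w hw j.toNat
    rw [hjt] at this
    rw [this]; ring
  rw [Finset.sum_congr rfl stepB, ← Finset.mul_sum]
  congr 1
  -- Step C
  have innerext : ∀ m ∈ Icc (-(N:ℤ)+1) ((N:ℤ)-1),
      (∑ j ∈ Icc (|m|+1) (N:ℤ), if Odd (j - m) then b j else 0) * w ^ m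
      = ∑ j ∈ Icc (1:ℤ) (N:ℤ), (if |m| + 1 ≤ j ∧ Odd (j - m) then b j * w ^ m else 0) := by
    intro m _
    rw [sum_mul]
    rw [show ∑ j ∈ Icc (|m|+1) (N:ℤ), (if Odd (j - m) then b j else 0) * w ^ m
        = ∑ j ∈ Icc (|m|+1) (N:ℤ), (if |m| + 1 ≤ j ∧ Odd (j - m) then b j * w ^ m else 0) from
      Finset.sum_congr rfl (fun j hj => by
        simp only [mem_Icc] at hj
        by_cases h : Odd (j - m)
        · rw [if_pos h, if_pos ⟨hj.1, h⟩]
        · rw [if_neg h, if_neg (fun hc => h hc.2), zero_mul])]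
    apply sum_subset
    · intro x hx
      simp only [mem_Icc] at hx ⊢
      have h0 : (0:ℤ) ≤ |m| := abs_nonneg m
      omega
    · intro x hxs hx
      rw [if_neg]
      intro hc
      simp only [mem_Icc] at hx hxs
      exact hx ⟨hc.1, by omega⟩
  rw [Finset.sum_congr rfl innerext, Finset.sum_comm]
  apply Finset.sum_congr rfl
  intro j hj
  simp only [mem_Icc] at hj
  -- fixed j: ∑_m indicator = b j * ∑_i w^(j-1-2i)
  rw [← Finset.sum_filter, Finset.mul_sum]
  have roundtrip : ∀ m ∈ filter (fun m => |m| + 1 ≤ j ∧ Odd (j - m)) (Icc (-(N:ℤ)+1) ((N:ℤ)-1)),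
      j - 1 - 2*((((j - 1 - m)/2).toNat : ℤ)) = m := by
    intro m hm
    simp only [mem_filter, mem_Icc] at hm
    obtain ⟨⟨hm1, hm2⟩, hm3, t, ht⟩ := hm
    have habs := abs_le.mp (by omega : |m| ≤ j - 1)
    omega
  apply Finset.sum_nbij' (fun i : ℕ => j - 1 - 2*(i:ℤ)) (fun m : ℤ => ((j - 1 - m)/2).toNat)
  · intro i hi
    simp only [mem_range] at hi
    have hi' : (i:ℤ) < j := by omega
    simp only [mem_filter, mem_Icc]
    refine ⟨⟨by omega, by omega⟩, ?_, ⟨(i:ℤ), by ring⟩⟩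
    have : |j - 1 - 2*(i:ℤ)| ≤ j - 1 := abs_le.mpr ⟨by omega, by omega⟩
    omega
  · intro m hm
    have hr := roundtrip m hm
    simp only [mem_filter, mem_Icc] at hm
    obtain ⟨⟨hm1, hm2⟩, hm3, t, ht⟩ := hm
    have habs := abs_le.mp (by omega : |m| ≤ j - 1)
    simp only [mem_range]
    omega
  · intro i hi
    simp only [mem_range] at hi
    omega
  · intro m hm; exact roundtrip m hm
  · intro i _; rfl

lemma gco_van (q a b c d : ℂ) (n : ℕ) (cf : ℤ → ℂ) (j : ℤ) (h : (n:ℤ) + 2 < |j|) :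
    gco q a b c d n cf j = 0 := by
  rw [gco]
  apply Finset.sum_eq_zero
  intro i hi
  simp only [mem_range] at hi
  have hj : (n:ℤ) + 2 < j ∨ (n:ℤ) + 2 < -j := lt_abs.mp h
  rw [E, if_neg, mul_zero]
  simp only [mem_Icc]
  omega

lemma bb_van (q a b c d : ℂ) (n : ℕ) (cf : ℤ → ℂ) (j : ℤ) (h : (n:ℤ) + 2 < |j|) :
    bb q a b c d n cf j = 0 := by
  rw [bb, gco_van _ _ _ _ _ _ _ _ h, gco_van _ _ _ _ _ _ _ (-j) (by rwa [abs_neg]), sub_zero]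

lemma bb_anti (q a b c d : ℂ) (n : ℕ) (cf : ℤ → ℂ) (j : ℤ) :
    bb q a b c d n cf (-j) = - bb q a b c d n cf j := by
  rw [bb, bb, neg_neg]; ring

lemma cc_symm (q a b c d : ℂ) (n : ℕ) (cf : ℤ → ℂ) (m : ℤ) :
    cc q a b c d n cf m = cc q a b c d n cf (-m) := by
  rw [cc, cc, abs_neg]
  apply Finset.sum_congr rfl
  intro j _
  have hiff : Odd (j - m) ↔ Odd (j - -m) := by
    simp only [Int.odd_iff]; omega
  by_cases h : Odd (j - m)
  · rw [if_pos h, if_pos (hiff.mp h)]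
  · rw [if_neg h, if_neg (fun hc => h (hiff.mpr hc))]

lemma cc_van (q a b c d : ℂ) (n : ℕ) (cf : ℤ → ℂ) (m : ℤ) (h : (n:ℤ) + 1 < |m|) :
    cc q a b c d n cf m = 0 := by
  rw [cc]
  apply Finset.sum_eq_zero
  intro j hj
  simp only [mem_Icc] at hj
  have habs : (0:ℤ) ≤ |m| := abs_nonneg m
  have hj0 : |j| = j := abs_of_nonneg (by omega)
  rw [bb_van q a b c d n cf j (by omega)]
  simp

lemma symLaurent_inv (n : ℕ) (cf : ℤ → ℂ) (hcf : ∀ k, cf k = cf (-k)) (w : ℂ) (hw : w ≠ 0) :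
    symLaurent n cf w⁻¹ = symLaurent n cf w := by
  rw [symLaurent, symLaurent]
  apply Finset.sum_nbij' (fun k : ℤ => -k) (fun k : ℤ => -k)
  · intro x hx; simp only [mem_Icc] at *; omega
  · intro x hx; simp only [mem_Icc] at *; omega
  · intro x _; omega
  · intro x _; omega
  · intro k _
    rw [← hcf k, zpow_neg, inv_zpow]


lemma bb_top (q a b c d : ℂ) (n : ℕ) (cf : ℤ → ℂ) (hcf : ∀ k, cf k = cf (-k)) :
    bb q a b c d n cf ((n:ℤ)+2) = (a*b*c*d*q^(n:ℕ) - q^(-(n:ℤ))) * cf n := by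
  have hmem : (n:ℤ) ∈ Finset.Icc (-(n:ℤ)) (n:ℤ) := by simp only [mem_Icc]; omega
  have hmem' : (-(n:ℤ)) ∈ Finset.Icc (-(n:ℤ)) (n:ℤ) := by simp only [mem_Icc]; omega
  have e0 : ∀ k : ℤ, (n:ℤ) < |k| → E n cf k = 0 := by
    intro k hk
    have := lt_abs.mp hk
    rw [E, if_neg]
    simp only [mem_Icc]; omega
  have hn : E n cf (n:ℤ) = cf n := if_pos hmem
  have hm0 : E n cf (-(n:ℤ)) = cf n := by rw [E, if_pos hmem', ← hcf]
  have g1 : gco q a b c d n cf ((n:ℤ)+2) = a*b*c*d * q^(n:ℕ) * cf n := by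
    rw [gco]
    rw [Finset.sum_eq_single_of_mem 4 (by simp)]
    · rw [show (n:ℤ)+2+2-((4:ℕ):ℤ) = (n:ℤ) by push_cast; ring, hn]
      rw [show p a b c d 4 = a*b*c*d from rfl, zpow_natCast]
    · intro i hi hne
      simp only [mem_range] at hi
      have hi3 : (i:ℤ) ≤ 3 := by omega
      have hi0 : (0:ℤ) ≤ (i:ℤ) := by positivity
      rw [e0 _ (by rw [abs_of_nonneg (by omega)]; omega), mul_zero]
  have g2 : gco q a b c d n cf (-((n:ℤ)+2)) = q^(-(n:ℤ)) * cf n := by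
    rw [gco]
    rw [Finset.sum_eq_single_of_mem 0 (by simp)]
    · rw [show -((n:ℤ)+2)+2-((0:ℕ):ℤ) = -(n:ℤ) by push_cast; ring, hm0]
      rw [show p a b c d 0 = 1 from rfl, one_mul]
    · intro i hi hne
      simp only [mem_range] at hi
      have hi1 : (1:ℤ) ≤ (i:ℤ) := by omega
      have hi4 : (i:ℤ) ≤ 4 := by omega
      rw [e0 _ (by rw [abs_of_nonpos (by omega)]; omega), mul_zero]
  rw [bb, g1, g2]; ring

lemma cc_top (q a b c d : ℂ) (n : ℕ) (cf : ℤ → ℂ) (hcf : ∀ k, cf k = cf (-k)) :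
    cc q a b c d n cf ((n:ℤ)+1) = (a*b*c*d*q^(n:ℕ) - q^(-(n:ℤ))) * cf n := by
  rw [cc]
  rw [show |(n:ℤ)+1| = (n:ℤ)+1 from abs_of_nonneg (by omega)]
  rw [Finset.sum_eq_single_of_mem ((n:ℤ)+2) (by simp only [mem_Icc]; omega)]
  · have hodd : Odd ((n:ℤ)+2 - ((n:ℤ)+1)) := ⟨0, by ring⟩
    rw [if_pos hodd, bb_top q a b c d n cf hcf]
  · intro j hj hne
    simp only [mem_Icc] at hj
    rw [bb_van q a b c d n cf j (by rw [abs_of_nonneg (by omega)]; omega)]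
    simp

end AW

theorem awL_degree_raising (q : ℝ) (hq0 : 0 < q) (hq1 : q < 1) (a b c d : ℂ)
    (n : ℕ) (cf : ℤ → ℂ) (hcf : ∀ k, cf k = cf (-k)) :
    ∃ c' : ℤ → ℂ, (∀ k, c' k = c' (-k)) ∧
      (∀ z : ℂ, z ≠ 0 → z ^ 2 ≠ 1 →
        awL (q : ℂ) a b c d (symLaurent n cf) z = symLaurent (n + 1) c' z) ∧
      c' (n + 1) = (a * b * c * d * (q : ℂ) ^ (n : ℕ) - (q : ℂ) ^ (-(n : ℤ))) * cf n ∧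
      (cf n ≠ 0 → a * b * c * d * (q : ℂ) ^ (2 * n) ≠ 1 → c' (n + 1) ≠ 0) := by
  have hqC : (q:ℂ) ≠ 0 := by
    simp only [ne_eq, Complex.ofReal_eq_zero]
    exact ne_of_gt hq0
  refine ⟨AW.cc (q:ℂ) a b c d n cf, fun k => AW.cc_symm (q:ℂ) a b c d n cf k, ?_, ?_, ?_⟩
  · intro z hz hz2
    have hzi : z⁻¹ ≠ 0 := inv_ne_zero hz
    have hsub : z - z⁻¹ ≠ 0 := by
      rw [sub_ne_zero]
      intro h
      apply hz2
      rw [sq]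
      nth_rewrite 2 [h]
      exact mul_inv_cancel₀ hz
    rw [awL]
    have h1 : symLaurent n cf ((q:ℂ)⁻¹ * z) = symLaurent n cf ((q:ℂ) * z⁻¹) := by
      rw [← AW.symLaurent_inv n cf hcf ((q:ℂ)⁻¹ * z) (mul_ne_zero (inv_ne_zero hqC) hz)]
      congr 1
      rw [mul_inv, inv_inv]
    have h2 : (z⁻¹ : ℂ) ^ (-2:ℤ) = z ^ 2 := by
      rw [zpow_neg, inv_zpow, inv_inv]
      norm_cast
    have hsecond : (1 - a / z) * (1 - b / z) * (1 - c / z) * (1 - d / z) * z ^ 2 *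
        symLaurent n cf ((q:ℂ)⁻¹ * z)
        = (1 - a*z⁻¹) * (1 - b*z⁻¹) * (1 - c*z⁻¹) * (1 - d*z⁻¹) * (z⁻¹) ^ (-2:ℤ) *
          symLaurent n cf ((q:ℂ) * z⁻¹) := by
      rw [h1, h2]
      simp only [div_eq_mul_inv]
    rw [hsecond]
    rw [AW.G_eq (q:ℂ) a b c d hqC n cf z hz, AW.G_eq (q:ℂ) a b c d hqC n cf z⁻¹ hzi]
    have hG2 : ∑ j ∈ Finset.Icc (-(n:ℤ)-6) ((n:ℤ)+6), AW.gco (q:ℂ) a b c d n cf j * (z⁻¹) ^ j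
        = ∑ j ∈ Finset.Icc (-(n:ℤ)-6) ((n:ℤ)+6), AW.gco (q:ℂ) a b c d n cf (-j) * z ^ j := by
      apply Finset.sum_nbij' (fun j : ℤ => -j) (fun j : ℤ => -j)
      · intro x hx; simp only [Finset.mem_Icc] at *; omega
      · intro x hx; simp only [Finset.mem_Icc] at *; omega
      · intro x _; omega
      · intro x _; omega
      · intro j _
        rw [neg_neg, inv_zpow, ← zpow_neg]
    rw [hG2, ← Finset.sum_sub_distrib]
    have hbb : ∀ j ∈ Finset.Icc (-(n:ℤ)-6) ((n:ℤ)+6),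
        AW.gco (q:ℂ) a b c d n cf j * z ^ j - AW.gco (q:ℂ) a b c d n cf (-j) * z ^ j
        = AW.bb (q:ℂ) a b c d n cf j * z ^ j := by
      intro j _
      rw [AW.bb]; ring
    rw [Finset.sum_congr rfl hbb]
    have hkey := AW.key (AW.bb (q:ℂ) a b c d n cf) (AW.bb_anti (q:ℂ) a b c d n cf) (n+6) z hz
    push_cast at hkey
    rw [show (-(n:ℤ)-6) = -((n:ℤ)+6) by ring] at *
    rw [hkey, mul_div_cancel_left₀ _ hsub]
    have hcc : ∀ m ∈ Finset.Icc (-((n:ℤ)+6)+1) ((n:ℤ)+6-1),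
        (∑ j ∈ Finset.Icc (|m|+1) ((n:ℤ)+6), if Odd (j - m) then AW.bb (q:ℂ) a b c d n cf j else 0) * z ^ m
        = AW.cc (q:ℂ) a b c d n cf m * z ^ m := by
      intro m _; rfl
    rw [Finset.sum_congr rfl hcc, symLaurent]
    symm
    apply Finset.sum_subset
    · intro x hx; simp only [Finset.mem_Icc] at *; push_cast at hx ⊢; omega
    · intro x hx hx'
      simp only [Finset.mem_Icc] at hx hx'
      push_cast at hx hx'
      rw [AW.cc_van (q:ℂ) a b c d n cf x (lt_abs.mpr (by omega)), zero_mul]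
  · exact AW.cc_top (q:ℂ) a b c d n cf hcf
  · intro h1 h2
    rw [AW.cc_top (q:ℂ) a b c d n cf hcf]
    intro hzero
    rcases mul_eq_zero.mp hzero with h | h
    · apply h2
      have heq : a*b*c*d*(q:ℂ)^(n:ℕ) = (q:ℂ)^(-(n:ℤ)) := sub_eq_zero.mp h
      calc a*b*c*d*(q:ℂ)^(2*n) = (a*b*c*d*(q:ℂ)^(n:ℕ)) * (q:ℂ)^(n:ℕ) := by
            rw [two_mul, pow_add]; ring
        _ = (q:ℂ)^(-(n:ℤ)) * (q:ℂ)^(n:ℕ) := by rw [heq]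
        _ = 1 := by rw [← zpow_natCast (q:ℂ) n, ← zpow_add₀ hqC]; simp
    · exact h1 h
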